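/- arXiv:1901.05118 — 3 statements merged into one kernel-verified Lean document; each statement's English description precedes it below -/
import Mathlib

section
/- Suppose u is smooth with bounded derivatives, A is C², and the grid solutions satisfy u^i(x) = u(x) + A(x)h_i² + R_i(x) with |R_i| ≤ M h₀⁴ at the points x_j, x_{j+1}, x_{j+1/2} = x_j + h₀/2, h₀ = x_{j+1} - x_j, h_i = h₀/2^i. Then the midpoint extrapolation formula ũ¹_{j+1/2} := u¹(x_{j+1/2}) + (1/6)(u¹(x_j) - u⁰(x_j) + u¹(x_{j+1}) - u⁰(x_{j+1})) satisfies |ũ¹_{j+1/2} - u(x_{j+1/2})| ≤ C h₀⁴, where C depends only on M and sup|A''| on [x_j, x_{j+1}]. -/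
/-- Midpoint extrapolation formula for the true solution: with error expansions
`uⁱ = u + A hᵢ² + Rᵢ` (`hᵢ = h₀/2ⁱ`, `|Rᵢ| ≤ M h₀⁴`) at the nodes `xⱼ`,
`xⱼ + h₀/2`, `xⱼ + h₀` and `A` of class C² with `|A''| ≤ K`, the formula
`ũ¹ = u¹(m) + (1/6)(u¹(xⱼ) - u⁰(xⱼ) + u¹(xⱼ₊₁) - u⁰(xⱼ₊₁))` is a fourth-order
approximation of `u(m)` at the midpoint `m = xⱼ + h₀/2`. -/
theorem midpoint_extrapolation_true
    (u u0 u1 A R0 R1 : ℝ → ℝ) (xj h₀ M K : ℝ)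
    (hh : 0 < h₀) (hM : 0 < M) (hK : 0 ≤ K)
    (hA : ContDiffOn ℝ 2 A (Set.Icc xj (xj + h₀)))
    (hA'' : ∀ y ∈ Set.Icc xj (xj + h₀),
      |iteratedDerivWithin 2 A (Set.Icc xj (xj + h₀)) y| ≤ K)
    (hu0 : ∀ x ∈ ({xj, xj + h₀} : Set ℝ),
      u0 x = u x + A x * h₀ ^ 2 + R0 x)
    (hu1 : ∀ x ∈ ({xj, xj + h₀ / 2, xj + h₀} : Set ℝ),
      u1 x = u x + A x * (h₀ / 2) ^ 2 + R1 x)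
    (hR0 : ∀ x ∈ ({xj, xj + h₀} : Set ℝ), |R0 x| ≤ M * h₀ ^ 4)
    (hR1 : ∀ x ∈ ({xj, xj + h₀ / 2, xj + h₀} : Set ℝ), |R1 x| ≤ M * h₀ ^ 4) :
    |u1 (xj + h₀ / 2) + 1 / 6 * (u1 xj - u0 xj + u1 (xj + h₀) - u0 (xj + h₀))
      - u (xj + h₀ / 2)| ≤ (K + 2 * M) * h₀ ^ 4 := by
  have hab : xj ≤ xj + h₀ := by linarith
  have hmem_m : xj + h₀ / 2 ∈ Set.Icc xj (xj + h₀) := by constructor <;> linarith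
  have hmem_r : xj + h₀ ∈ Set.Icc xj (xj + h₀) := by constructor <;> linarith
  have hf : ContDiffOn ℝ ((1 : ℕ) + 1) A (Set.Icc xj (xj + h₀)) := by
    exact_mod_cast hA
  have hC : ∀ y ∈ Set.Icc xj (xj + h₀),
      ‖iteratedDerivWithin (1 + 1) A (Set.Icc xj (xj + h₀)) y‖ ≤ K := by
    intro y hy; simpa using hA'' y hy
  have T1 := taylor_mean_remainder_bound (f := A) (n := 1) hab hf hmem_m hC
  have T2 := taylor_mean_remainder_bound (f := A) (n := 1) hab hf hmem_r hC
  rw [taylor_within_apply] at T1 T2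
  simp only [Finset.sum_range_succ, Finset.sum_range_zero, Real.norm_eq_abs,
    pow_zero, pow_one, smul_eq_mul, iteratedDerivWithin_zero] at T1 T2
  set d := iteratedDerivWithin 1 A (Set.Icc xj (xj + h₀)) xj with hd
  have T1' : |A (xj + h₀ / 2) - A xj - d * (h₀ / 2)| ≤ K * h₀ ^ 2 / 4 := by
    calc |A (xj + h₀ / 2) - A xj - d * (h₀ / 2)|
        = |A (xj + h₀ / 2) -
            (0 + (↑(Nat.factorial 0) : ℝ)⁻¹ * 1 * A xj
              + (↑(Nat.factorial 1) : ℝ)⁻¹ * (xj + h₀ / 2 - xj) * d)| := by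
          congr 1; norm_num [Nat.factorial]; try ring
      _ ≤ K * (xj + h₀ / 2 - xj) ^ (1 + 1) / ↑(Nat.factorial 1) := T1
      _ = K * h₀ ^ 2 / 4 := by norm_num [Nat.factorial]; try ring
  have T2' : |A (xj + h₀) - A xj - d * h₀| ≤ K * h₀ ^ 2 := by
    calc |A (xj + h₀) - A xj - d * h₀|
        = |A (xj + h₀) -
            (0 + (↑(Nat.factorial 0) : ℝ)⁻¹ * 1 * A xj
              + (↑(Nat.factorial 1) : ℝ)⁻¹ * (xj + h₀ - xj) * d)| := by
          congr 1; norm_num [Nat.factorial]; try ring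
      _ ≤ K * (xj + h₀ - xj) ^ (1 + 1) / ↑(Nat.factorial 1) := T2
      _ = K * h₀ ^ 2 := by norm_num [Nat.factorial]; try ring
  have hmj : u1 xj = u xj + A xj * (h₀ / 2) ^ 2 + R1 xj := hu1 xj (by simp)
  have hmm : u1 (xj + h₀ / 2) = u (xj + h₀ / 2) + A (xj + h₀ / 2) * (h₀ / 2) ^ 2
      + R1 (xj + h₀ / 2) := hu1 _ (by simp)
  have hmr : u1 (xj + h₀) = u (xj + h₀) + A (xj + h₀) * (h₀ / 2) ^ 2 + R1 (xj + h₀) :=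
    hu1 _ (by simp)
  have h0j : u0 xj = u xj + A xj * h₀ ^ 2 + R0 xj := hu0 xj (by simp)
  have h0r : u0 (xj + h₀) = u (xj + h₀) + A (xj + h₀) * h₀ ^ 2 + R0 (xj + h₀) :=
    hu0 _ (by simp)
  have r1j := hR1 xj (by simp)
  have r1m := hR1 (xj + h₀ / 2) (by simp)
  have r1r := hR1 (xj + h₀) (by simp)
  have r0j := hR0 xj (by simp)
  have r0r := hR0 (xj + h₀) (by simp)
  rw [hmj, hmm, hmr, h0j, h0r]
  rw [abs_le] at T1' T2' r1j r1m r1r r0j r0r ⊢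
  have h2 : (0:ℝ) ≤ h₀ ^ 2 := sq_nonneg _
  have m1u := mul_le_mul_of_nonneg_left T1'.2 h2
  have m1l := mul_le_mul_of_nonneg_left T1'.1 h2
  have m2u := mul_le_mul_of_nonneg_left T2'.2 h2
  have m2l := mul_le_mul_of_nonneg_left T2'.1 h2
  have hMh : (0:ℝ) ≤ M * h₀ ^ 4 := by positivity
  have hKh : (0:ℝ) ≤ K * h₀ ^ 4 := by positivity
  constructor <;>
    linarith [m1u, m1l, m2u, m2l, r1j.1, r1j.2, r1m.1, r1m.2, r1r.1, r1r.2,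
      r0j.1, r0j.2, r0r.1, r0r.2, hMh, hKh]
end

section
/- Under the same hypotheses as the midpoint extrapolation lemma (error expansions with C² coefficient A), the formula w²_{j+1/2} := u¹(x_{j+1/2}) + (1/8)(u¹(x_j) - u⁰(x_j) + u¹(x_{j+1}) - u⁰(x_{j+1})) satisfies |w²_{j+1/2} - u²(x_{j+1/2})| ≤ C h₀⁴, where u² is the solution on the grid of size h₂ = h₀/4 obeying the same error expansion. -/
/-- Second-difference bound for a `C²` function on `[a, b]` with second
derivative bounded by `K`. -/
lemma second_diff_bound (A : ℝ → ℝ) (a b K : ℝ) (hab : a < b) (hK : 0 ≤ K)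
    (hA : ContDiffOn ℝ 2 A (Set.Icc a b))
    (hA'' : ∀ y ∈ Set.Icc a b,
      |iteratedDerivWithin 2 A (Set.Icc a b) y| ≤ K) :
    |A a + A b - 2 * A ((a + b) / 2)| ≤ K * (b - a) ^ 2 / 2 := by
  set s : Set ℝ := Set.Icc a b with hs_def
  have hsU : UniqueDiffOn ℝ s := uniqueDiffOn_Icc hab
  have hconv : Convex ℝ s := convex_Icc a b
  set m : ℝ := (a + b) / 2 with hm_def
  have ha : a ∈ s := Set.left_mem_Icc.2 hab.le
  have hb : b ∈ s := Set.right_mem_Icc.2 hab.le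
  have hm : m ∈ s := ⟨by simp only [hm_def]; linarith, by simp only [hm_def]; linarith⟩
  set A' : ℝ → ℝ := derivWithin A s with hA'_def
  have hA'cd : ContDiffOn ℝ 1 A' s := hA.derivWithin hsU (by norm_num)
  have hA'diff : DifferentiableOn ℝ A' s := hA'cd.differentiableOn (by norm_num)
  have hAdiff : DifferentiableOn ℝ A s := hA.differentiableOn (by norm_num)
  -- `A'` is `K`-Lipschitz on `s`
  have hlip : ∀ y ∈ s, |A' y - A' m| ≤ K * |y - m| := by
    intro y hy
    have := Convex.norm_image_sub_le_of_norm_derivWithin_le (f := A') hA'diff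
      (fun z hz => by
        have h1 : iteratedDerivWithin 2 A s z = derivWithin A' s z := by
          rw [iteratedDerivWithin_succ]
          exact derivWithin_congr (fun w hw => congrFun iteratedDerivWithin_one w)
            (congrFun iteratedDerivWithin_one z)
        rw [Real.norm_eq_abs, ← h1]
        exact hA'' z hz) hconv hm hy
    simpa [Real.norm_eq_abs] using this
  -- Taylor-type estimate at `m`
  have key : ∀ y ∈ s, |A y - A m - A' m * (y - m)| ≤ K * ((b - a) / 2) * |y - m| := by
    intro y hy
    set g : ℝ → ℝ := fun z => A z - A' m * z with hg_def
    have hg : ∀ z ∈ s, HasDerivWithinAt g (A' z - A' m) s z := by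
      intro z hz
      have h2 : HasDerivWithinAt (fun w => A' m * w) (A' m) s z := by
        simpa using (hasDerivWithinAt_id z s).const_mul (A' m)
      exact ((hAdiff z hz).hasDerivWithinAt).sub h2
    have hbound : ∀ z ∈ s, ‖A' z - A' m‖ ≤ K * ((b - a) / 2) := by
      intro z hz
      have h1 := hlip z hz
      have h2 : |z - m| ≤ (b - a) / 2 := by
        rw [abs_le]
        obtain ⟨hz1, hz2⟩ := hz
        constructor <;> simp only [hm_def] at * <;> nlinarith
      calc ‖A' z - A' m‖ ≤ K * |z - m| := by simpa [Real.norm_eq_abs] using h1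
        _ ≤ K * ((b - a) / 2) := by nlinarith [abs_nonneg (z - m)]
    have := hconv.norm_image_sub_le_of_norm_hasDerivWithin_le hg hbound hm hy
    have hgy : g y - g m = A y - A m - A' m * (y - m) := by simp [hg_def]; ring
    rw [hgy] at this
    simpa [Real.norm_eq_abs] using this
  have hka := key a ha
  have hkb := key b hb
  have ham : |a - m| = (b - a) / 2 := by
    rw [abs_of_nonpos (by simp only [hm_def]; linarith)]
    simp only [hm_def]; ring
  have hbm : |b - m| = (b - a) / 2 := by
    rw [abs_of_nonneg (by simp only [hm_def]; linarith)]
    simp only [hm_def]; ring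
  rw [ham] at hka
  rw [hbm] at hkb
  have hsum : A a + A b - 2 * A m
      = (A a - A m - A' m * (a - m)) + (A b - A m - A' m * (b - m)) := by
    simp only [hm_def]; ring
  calc |A a + A b - 2 * A m|
      ≤ |A a - A m - A' m * (a - m)| + |A b - A m - A' m * (b - m)| := by
        rw [hsum]; exact abs_add_le _ _
    _ ≤ K * ((b - a) / 2) * ((b - a) / 2) + K * ((b - a) / 2) * ((b - a) / 2) := by
        exact add_le_add hka hkb
    _ = K * (b - a) ^ 2 / 2 := by ring

/-- Midpoint extrapolation towards the finite difference solution `u²` on the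
grid of size `h₀/4`: under the same hypotheses as the midpoint extrapolation
lemma, `w² = u¹(m) + (1/8)(u¹(xⱼ) - u⁰(xⱼ) + u¹(xⱼ₊₁) - u⁰(xⱼ₊₁))` is a
fourth-order approximation of `u²(m)` at the midpoint `m = xⱼ + h₀/2`. -/
theorem midpoint_extrapolation_fd
    (u u0 u1 u2 A R0 R1 R2 : ℝ → ℝ) (xj h₀ M K : ℝ)
    (hh : 0 < h₀) (hM : 0 < M) (hK : 0 ≤ K)
    (hA : ContDiffOn ℝ 2 A (Set.Icc xj (xj + h₀)))
    (hA'' : ∀ y ∈ Set.Icc xj (xj + h₀),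
      |iteratedDerivWithin 2 A (Set.Icc xj (xj + h₀)) y| ≤ K)
    (hu0 : ∀ x ∈ ({xj, xj + h₀} : Set ℝ),
      u0 x = u x + A x * h₀ ^ 2 + R0 x)
    (hu1 : ∀ x ∈ ({xj, xj + h₀ / 2, xj + h₀} : Set ℝ),
      u1 x = u x + A x * (h₀ / 2) ^ 2 + R1 x)
    (hu2 : u2 (xj + h₀ / 2) = u (xj + h₀ / 2)
      + A (xj + h₀ / 2) * (h₀ / 4) ^ 2 + R2 (xj + h₀ / 2))
    (hR0 : ∀ x ∈ ({xj, xj + h₀} : Set ℝ), |R0 x| ≤ M * h₀ ^ 4)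
    (hR1 : ∀ x ∈ ({xj, xj + h₀ / 2, xj + h₀} : Set ℝ), |R1 x| ≤ M * h₀ ^ 4)
    (hR2 : |R2 (xj + h₀ / 2)| ≤ M * h₀ ^ 4) :
    |u1 (xj + h₀ / 2) + 1 / 8 * (u1 xj - u0 xj + u1 (xj + h₀) - u0 (xj + h₀))
      - u2 (xj + h₀ / 2)| ≤ (K + 3 * M) * h₀ ^ 4 := by
  have hxjm : xj ∈ ({xj, xj + h₀} : Set ℝ) := Or.inl rfl
  have hxbm : xj + h₀ ∈ ({xj, xj + h₀} : Set ℝ) := Or.inr rfl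
  have h1j : xj ∈ ({xj, xj + h₀ / 2, xj + h₀} : Set ℝ) := Or.inl rfl
  have h1m : xj + h₀ / 2 ∈ ({xj, xj + h₀ / 2, xj + h₀} : Set ℝ) := Or.inr (Or.inl rfl)
  have h1b : xj + h₀ ∈ ({xj, xj + h₀ / 2, xj + h₀} : Set ℝ) := Or.inr (Or.inr rfl)
  have e0j := hu0 xj hxjm
  have e0b := hu0 (xj + h₀) hxbm
  have e1j := hu1 xj h1j
  have e1m := hu1 (xj + h₀ / 2) h1m
  have e1b := hu1 (xj + h₀) h1b
  have r0j := hR0 xj hxjm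
  have r0b := hR0 (xj + h₀) hxbm
  have r1j := hR1 xj h1j
  have r1m := hR1 (xj + h₀ / 2) h1m
  have r1b := hR1 (xj + h₀) h1b
  have hmid : (xj + (xj + h₀)) / 2 = xj + h₀ / 2 := by ring
  have hsd := second_diff_bound A xj (xj + h₀) K (by linarith) hK hA hA''
  rw [hmid] at hsd
  have hsd' : |A xj + A (xj + h₀) - 2 * A (xj + h₀ / 2)| ≤ K * h₀ ^ 2 / 2 := by
    have : (xj + h₀ - xj) ^ 2 = h₀ ^ 2 := by ring
    rw [this] at hsd; exact hsd
  set D := A xj + A (xj + h₀) - 2 * A (xj + h₀ / 2) with hD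
  have hexpr : u1 (xj + h₀ / 2)
      + 1 / 8 * (u1 xj - u0 xj + u1 (xj + h₀) - u0 (xj + h₀)) - u2 (xj + h₀ / 2)
      = -(3 / 32) * h₀ ^ 2 * D
        + (R1 (xj + h₀ / 2) + 1 / 8 * (R1 xj - R0 xj + R1 (xj + h₀) - R0 (xj + h₀))
            - R2 (xj + h₀ / 2)) := by
    rw [e0j, e0b, e1j, e1m, e1b, hu2, hD]; ring
  rw [hexpr]
  have hE : |R1 (xj + h₀ / 2)
      + 1 / 8 * (R1 xj - R0 xj + R1 (xj + h₀) - R0 (xj + h₀)) - R2 (xj + h₀ / 2)|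
      ≤ 3 * M * h₀ ^ 4 := by
    have h4 : |R1 xj - R0 xj + R1 (xj + h₀) - R0 (xj + h₀)| ≤ 4 * (M * h₀ ^ 4) := by
      calc |R1 xj - R0 xj + R1 (xj + h₀) - R0 (xj + h₀)|
          ≤ |R1 xj| + |R0 xj| + |R1 (xj + h₀)| + |R0 (xj + h₀)| := by
            apply (abs_sub _ _).trans
            gcongr
            apply (abs_add_le _ _).trans
            gcongr
            exact abs_sub _ _
        _ ≤ 4 * (M * h₀ ^ 4) := by linarith
    calc |R1 (xj + h₀ / 2)
        + 1 / 8 * (R1 xj - R0 xj + R1 (xj + h₀) - R0 (xj + h₀)) - R2 (xj + h₀ / 2)|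
        ≤ |R1 (xj + h₀ / 2)|
          + 1 / 8 * |R1 xj - R0 xj + R1 (xj + h₀) - R0 (xj + h₀)| + |R2 (xj + h₀ / 2)| := by
          apply (abs_sub _ _).trans
          gcongr
          apply (abs_add_le _ _).trans
          gcongr
          rw [abs_mul, abs_of_nonneg (by norm_num : (0:ℝ) ≤ 1 / 8)]
      _ ≤ 3 * M * h₀ ^ 4 := by nlinarith [mul_pos hM (pow_pos hh 4)]
  have hD' : |(-(3 / 32) * h₀ ^ 2) * D| ≤ K * h₀ ^ 4 := by
    rw [abs_mul]
    have hpos : (0:ℝ) ≤ 3 / 32 * h₀ ^ 2 := by positivity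
    have h1 : |(-(3 / 32) * h₀ ^ 2)| = 3 / 32 * h₀ ^ 2 := by
      rw [abs_of_nonpos (by linarith)]; ring
    rw [h1]
    nlinarith [mul_le_mul_of_nonneg_left hsd' hpos,
      mul_nonneg hK (pow_nonneg hh.le 4)]
  calc |(-(3 / 32) * h₀ ^ 2 * D)
      + (R1 (xj + h₀ / 2) + 1 / 8 * (R1 xj - R0 xj + R1 (xj + h₀) - R0 (xj + h₀))
          - R2 (xj + h₀ / 2))|
      ≤ |(-(3 / 32) * h₀ ^ 2) * D|
        + |R1 (xj + h₀ / 2) + 1 / 8 * (R1 xj - R0 xj + R1 (xj + h₀) - R0 (xj + h₀))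
            - R2 (xj + h₀ / 2)| := abs_add_le _ _
    _ ≤ K * h₀ ^ 4 + 3 * M * h₀ ^ 4 := add_le_add hD' hE
    _ = (K + 3 * M) * h₀ ^ 4 := by ring
end

section
/- For u(x,y,z) = x⁴ (or y⁴ or z⁴), the 25-point stencil applied at any point P with mesh size h yields 24h⁴ = h⁴·(∂⁴u/∂x⁴); more generally, for any polynomial u of total degree ≤ 5, the 25-point stencil value at P equals h⁴·(Δ²u)(P). -/
/-- Evaluation of a trivariate polynomial at a point of `ℝ³`. -/
noncomputable def evalP3 (p : MvPolynomial (Fin 3) ℝ) (a b c : ℝ) : ℝ :=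
  MvPolynomial.eval ![a, b, c] p

/-- The biharmonic operator `Δ² = ∂⁴ₓ + ∂⁴ᵧ + ∂⁴_z + 2∂²ₓ∂²ᵧ + 2∂²ₓ∂²_z + 2∂²ᵧ∂²_z`
acting on trivariate polynomials. -/
noncomputable def biharmPoly (p : MvPolynomial (Fin 3) ℝ) : MvPolynomial (Fin 3) ℝ :=
  (MvPolynomial.pderiv 0)^[4] p + (MvPolynomial.pderiv 1)^[4] p
    + (MvPolynomial.pderiv 2)^[4] p
    + 2 * (MvPolynomial.pderiv 0)^[2] ((MvPolynomial.pderiv 1)^[2] p)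
    + 2 * (MvPolynomial.pderiv 0)^[2] ((MvPolynomial.pderiv 2)^[2] p)
    + 2 * (MvPolynomial.pderiv 1)^[2] ((MvPolynomial.pderiv 2)^[2] p)

open MvPolynomial Finset

lemma pd_iter_monomial (i : Fin 3) (n : ℕ) (s : Fin 3 →₀ ℕ) (a : ℝ) :
    (pderiv i)^[n] (monomial s a) =
      monomial (s - Finsupp.single i n) (a * ∏ t ∈ Finset.range n, ((s i - t : ℕ) : ℝ)) := by
  induction n with
  | zero => simp
  | succ n ih =>
      rw [Function.iterate_succ', Function.comp_apply, ih, pderiv_monomial]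
      congr 1
      · rw [tsub_tsub, ← Finsupp.single_add]
      · rw [Finset.prod_range_succ, Finsupp.tsub_apply, Finsupp.single_eq_same]
        push_cast [mul_assoc]
        ring

lemma evalP3_monomial (s : Fin 3 →₀ ℕ) (a x y z : ℝ) :
    MvPolynomial.eval ![x, y, z] (monomial s a) = a * x ^ s 0 * y ^ s 1 * z ^ s 2 := by
  rw [eval_monomial, Finsupp.prod_fintype]
  · simp [Fin.prod_univ_three, mul_assoc]
  · intro i; simp


set_option maxHeartbeats 1000000 in
lemma biharm_eval_mono (s : Fin 3 →₀ ℕ) (a x y z : ℝ) :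
    MvPolynomial.eval ![x, y, z] (biharmPoly (monomial s a)) =
      (a * ∏ t ∈ Finset.range 4, ((s 0 - t : ℕ) : ℝ)) * x ^ (s 0 - 4) * y ^ s 1 * z ^ s 2 +
      (a * ∏ t ∈ Finset.range 4, ((s 1 - t : ℕ) : ℝ)) * x ^ s 0 * y ^ (s 1 - 4) * z ^ s 2 +
      (a * ∏ t ∈ Finset.range 4, ((s 2 - t : ℕ) : ℝ)) * x ^ s 0 * y ^ s 1 * z ^ (s 2 - 4) +
      2 * (((a * ∏ t ∈ Finset.range 2, ((s 1 - t : ℕ) : ℝ)) * ∏ t ∈ Finset.range 2, ((s 0 - t : ℕ) : ℝ))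
            * x ^ (s 0 - 2) * y ^ (s 1 - 2) * z ^ s 2) +
      2 * (((a * ∏ t ∈ Finset.range 2, ((s 2 - t : ℕ) : ℝ)) * ∏ t ∈ Finset.range 2, ((s 0 - t : ℕ) : ℝ))
            * x ^ (s 0 - 2) * y ^ s 1 * z ^ (s 2 - 2)) +
      2 * (((a * ∏ t ∈ Finset.range 2, ((s 2 - t : ℕ) : ℝ)) * ∏ t ∈ Finset.range 2, ((s 1 - t : ℕ) : ℝ))
            * x ^ s 0 * y ^ (s 1 - 2) * z ^ (s 2 - 2)) := by
  simp only [biharmPoly, pd_iter_monomial, map_add, map_mul, map_ofNat,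
    evalP3_monomial, Finsupp.tsub_apply, Finsupp.single_apply]
  norm_num [Fin.ext_iff]

set_option maxHeartbeats 2000000 in
lemma mono_case (s : Fin 3 →₀ ℕ) (hs : s 0 + s 1 + s 2 ≤ 5) (a x y z h : ℝ) :
    42 * evalP3 (monomial s a) x y z
      - 12 * (evalP3 (monomial s a) (x + h) y z + evalP3 (monomial s a) (x - h) y z
            + evalP3 (monomial s a) x (y + h) z + evalP3 (monomial s a) x (y - h) z
            + evalP3 (monomial s a) x y (z + h) + evalP3 (monomial s a) x y (z - h))
      + (evalP3 (monomial s a) (x + 2 * h) y z + evalP3 (monomial s a) (x - 2 * h) y z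
       + evalP3 (monomial s a) x (y + 2 * h) z + evalP3 (monomial s a) x (y - 2 * h) z
       + evalP3 (monomial s a) x y (z + 2 * h) + evalP3 (monomial s a) x y (z - 2 * h))
      + 2 * (evalP3 (monomial s a) (x + h) (y + h) z + evalP3 (monomial s a) (x + h) (y - h) z
           + evalP3 (monomial s a) (x - h) (y + h) z + evalP3 (monomial s a) (x - h) (y - h) z
           + evalP3 (monomial s a) (x + h) y (z + h) + evalP3 (monomial s a) (x + h) y (z - h)
           + evalP3 (monomial s a) (x - h) y (z + h) + evalP3 (monomial s a) (x - h) y (z - h)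
           + evalP3 (monomial s a) x (y + h) (z + h) + evalP3 (monomial s a) x (y + h) (z - h)
           + evalP3 (monomial s a) x (y - h) (z + h) + evalP3 (monomial s a) x (y - h) (z - h))
    = h ^ 4 * evalP3 (biharmPoly (monomial s a)) x y z := by
  simp only [evalP3, evalP3_monomial, biharm_eval_mono]
  set i := s 0 with hi
  set j := s 1 with hj
  set k := s 2 with hk
  have h5 : i + j + k ≤ 5 := hs
  clear_value i j k
  clear hi hj hk hs s
  have hi5 : i ≤ 5 := by omega
  have hj5 : j ≤ 5 := by omega
  have hk5 : k ≤ 5 := by omega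
  interval_cases i <;> interval_cases j <;> interval_cases k <;>
    first
      | omega
      | (norm_num [Finset.prod_range_succ]; ring)

lemma pd_iter_add (i : Fin 3) (n : ℕ) (p q : MvPolynomial (Fin 3) ℝ) :
    (pderiv i)^[n] (p + q) = (pderiv i)^[n] p + (pderiv i)^[n] q := by
  induction n generalizing p q with
  | zero => rfl
  | succ n ih => simp [Function.iterate_succ', ih, map_add, -Function.iterate_succ]

lemma biharm_add (p q : MvPolynomial (Fin 3) ℝ) :
    biharmPoly (p + q) = biharmPoly p + biharmPoly q := by
  simp only [biharmPoly, pd_iter_add, mul_add]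
  ring

lemma pd_iter_zero (i : Fin 3) (n : ℕ) :
    (pderiv i)^[n] (0 : MvPolynomial (Fin 3) ℝ) = 0 := by
  induction n with
  | zero => rfl
  | succ n ih => simp [Function.iterate_succ', ih, -Function.iterate_succ]

lemma biharm_zero : biharmPoly (0 : MvPolynomial (Fin 3) ℝ) = 0 := by
  simp [biharmPoly, pd_iter_zero]

/-- The 3D 25-point biharmonic stencil is exact on polynomials of total
degree ≤ 5: its value equals `h⁴ (Δ²u)(P)`. -/
theorem stencil25_exact_on_quintics
    (p : MvPolynomial (Fin 3) ℝ) (hp : p.totalDegree ≤ 5) (x y z h : ℝ)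
    (hh : 0 < h) :
    42 * evalP3 p x y z
      - 12 * (evalP3 p (x + h) y z + evalP3 p (x - h) y z
            + evalP3 p x (y + h) z + evalP3 p x (y - h) z
            + evalP3 p x y (z + h) + evalP3 p x y (z - h))
      + (evalP3 p (x + 2 * h) y z + evalP3 p (x - 2 * h) y z
       + evalP3 p x (y + 2 * h) z + evalP3 p x (y - 2 * h) z
       + evalP3 p x y (z + 2 * h) + evalP3 p x y (z - 2 * h))
      + 2 * (evalP3 p (x + h) (y + h) z + evalP3 p (x + h) (y - h) z
           + evalP3 p (x - h) (y + h) z + evalP3 p (x - h) (y - h) z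
           + evalP3 p (x + h) y (z + h) + evalP3 p (x + h) y (z - h)
           + evalP3 p (x - h) y (z + h) + evalP3 p (x - h) y (z - h)
           + evalP3 p x (y + h) (z + h) + evalP3 p x (y + h) (z - h)
           + evalP3 p x (y - h) (z + h) + evalP3 p x (y - h) (z - h))
    = h ^ 4 * evalP3 (biharmPoly p) x y z := by
  set F : MvPolynomial (Fin 3) ℝ → ℝ := fun q =>
    (42 * evalP3 q x y z
      - 12 * (evalP3 q (x + h) y z + evalP3 q (x - h) y z
            + evalP3 q x (y + h) z + evalP3 q x (y - h) z
            + evalP3 q x y (z + h) + evalP3 q x y (z - h))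
      + (evalP3 q (x + 2 * h) y z + evalP3 q (x - 2 * h) y z
       + evalP3 q x (y + 2 * h) z + evalP3 q x (y - 2 * h) z
       + evalP3 q x y (z + 2 * h) + evalP3 q x y (z - 2 * h))
      + 2 * (evalP3 q (x + h) (y + h) z + evalP3 q (x + h) (y - h) z
           + evalP3 q (x - h) (y + h) z + evalP3 q (x - h) (y - h) z
           + evalP3 q (x + h) y (z + h) + evalP3 q (x + h) y (z - h)
           + evalP3 q (x - h) y (z + h) + evalP3 q (x - h) y (z - h)
           + evalP3 q x (y + h) (z + h) + evalP3 q x (y + h) (z - h)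
           + evalP3 q x (y - h) (z + h) + evalP3 q x (y - h) (z - h)))
      - h ^ 4 * evalP3 (biharmPoly q) x y z with hF
  rw [← sub_eq_zero]
  show F p = 0
  have Fadd : ∀ q r, F (q + r) = F q + F r := by
    intro q r
    simp only [hF, evalP3, biharm_add, map_add]
    ring
  have F0 : F 0 = 0 := by
    simp [hF, evalP3, biharm_zero]
  have Fmono : ∀ s ∈ p.support, ∀ a : ℝ, F (monomial s a) = 0 := by
    intro s hsupp a
    have hdeg : s 0 + s 1 + s 2 ≤ 5 := by
      have h1 := MvPolynomial.le_totalDegree hsupp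
      have h2 : (s.sum fun _ e => e) = s 0 + s 1 + s 2 := by
        rw [Finsupp.sum_fintype]
        · simp [Fin.sum_univ_three]
        · intro; rfl
      omega
    rw [sub_eq_zero]
    exact mono_case s hdeg a x y z h
  have key : ∀ t : Finset (Fin 3 →₀ ℕ), t ⊆ p.support →
      F (∑ s ∈ t, monomial s (MvPolynomial.coeff s p)) = 0 := by
    intro t
    induction t using Finset.induction_on with
    | empty => intro _; simpa using F0
    | insert _ _ hnot ih =>
        intro hsub
        rename_i s t
        rw [Finset.sum_insert hnot, Fadd,
          Fmono s (hsub (Finset.mem_insert_self s t)) _,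
          ih (fun u hu => hsub (Finset.mem_insert_of_mem hu))]
        ring
  have := key p.support (subset_refl _)
  rwa [← MvPolynomial.as_sum p] at this
end
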